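/- For each i = 1, …, d, ∫_{[0,1]^d} μ(ξ) ( ∫_{ℝ^d} a(ξ−q) (ξ−q)^i μ(q) dq ) dξ = 0; that is, the right-hand side f(ξ) = ∫_{ℝ^d} a(ξ−q)(ξ−q) μ(q) dq of the first corrector equation satisfies the solvability condition ∫_{[0,1]^d} f(ξ) μ(ξ) dξ = 0. -/

import Mathlib

open MeasureTheory Filter Topology
open scoped ENNReal Pointwise

noncomputable section

/-- The period cell `[0,1]^d`. -/
def cell (d : ℕ) : Set (EuclideanSpace ℝ (Fin d)) := {x | ∀ i, x i ∈ Set.Icc (0:ℝ) 1}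

namespace Stmt4Aux

variable {d : ℕ}

lemma periodic_lattice (mu : EuclideanSpace ℝ (Fin d) → ℝ)
    (hmu_per : ∀ x i, mu (x + EuclideanSpace.single i 1) = mu x)
    (l : EuclideanSpace ℝ (Fin d))
    (hl : l ∈ Submodule.span ℤ (Set.range (EuclideanSpace.basisFun (Fin d) ℝ).toBasis)) :
    ∀ x, mu (x + l) = mu x := by
  induction hl using Submodule.span_induction with
  | mem l hl =>
      obtain ⟨i, rfl⟩ := hl
      intro x
      simpa [EuclideanSpace.basisFun_apply] using hmu_per x i
  | zero => simp
  | add l₁ l₂ _ _ h₁ h₂ => intro x; rw [← add_assoc, h₂, h₁]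
  | smul c l _ h =>
      have hneg : ∀ x, mu (x - l) = mu x := by
        intro x
        have := h (x - l)
        rw [sub_add_cancel] at this; exact this.symm
      intro x
      induction c using Int.induction_on with
      | zero => simp
      | succ n ih =>
          have : ((n : ℤ) + 1) • l = (n : ℤ) • l + l := by
            rw [add_smul, one_smul]
          rw [this, ← add_assoc, h, ih]
      | pred n ih =>
          have : (-(n : ℤ) - 1) • l = (-(n : ℤ)) • l - l := by
            rw [sub_smul, one_smul]
          rw [this, ← add_sub_assoc, hneg, ih]

instance euclVAddComm (Γ : Submodule ℤ (EuclideanSpace ℝ (Fin d))) :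
    VAddCommClass (EuclideanSpace ℝ (Fin d)) Γ (EuclideanSpace ℝ (Fin d)) :=
  ⟨fun a b c => by
    simp only [vadd_eq_add, Submodule.vadd_def]
    rw [← add_assoc, add_comm a (b : EuclideanSpace ℝ (Fin d)), add_assoc]⟩

instance euclMeasVAdd (Γ : Submodule ℤ (EuclideanSpace ℝ (Fin d))) :
    MeasurableVAdd Γ (EuclideanSpace ℝ (Fin d)) :=
  { measurable_const_vadd := fun c => ((measurable_const_add (c : EuclideanSpace ℝ (Fin d))).comp measurable_id).comp measurable_id
    measurable_vadd_const := fun x => by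
      have : (fun c : Γ => c +ᵥ x) = fun c : Γ => (c : EuclideanSpace ℝ (Fin d)) + x := rfl
      rw [this]
      exact measurable_subtype_coe.add_const x }

instance euclVAddInv (Γ : Submodule ℤ (EuclideanSpace ℝ (Fin d))) :
    VAddInvariantMeasure Γ (EuclideanSpace ℝ (Fin d)) volume :=
  ⟨fun c s hs => by
    simpa [vadd_eq_add, Submodule.vadd_def] using
      measure_preimage_add volume (c : EuclideanSpace ℝ (Fin d)) s⟩

lemma cell_eq_parallelepiped :
    cell d = parallelepiped ((EuclideanSpace.basisFun (Fin d) ℝ).toBasis) := by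
  rw [parallelepiped_basis_eq]
  rfl

lemma corr_even (mu : EuclideanSpace ℝ (Fin d) → ℝ)
    (hper : ∀ l ∈ Submodule.span ℤ
      (Set.range (EuclideanSpace.basisFun (Fin d) ℝ).toBasis), ∀ x, mu (x + l) = mu x)
    (z : EuclideanSpace ℝ (Fin d)) :
    (∫ ξ in cell d, mu ξ * mu (ξ + z)) = ∫ ξ in cell d, mu ξ * mu (ξ - z) := by
  set b := (EuclideanSpace.basisFun (Fin d) ℝ).toBasis with hb
  set D := ZSpan.fundamentalDomain b with hD
  have hFD : IsAddFundamentalDomain (Submodule.span ℤ (Set.range b)) D volume :=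
    ZSpan.isAddFundamentalDomain b volume
  set F : EuclideanSpace ℝ (Fin d) → ℝ := fun η => mu η * mu (η - z) with hF
  have hFper : ∀ (g : Submodule.span ℤ (Set.range b)) (x : EuclideanSpace ℝ (Fin d)),
      F ((g : EuclideanSpace ℝ (Fin d)) +ᵥ x) = F x := by
    intro g x
    have h1 := hper g g.2 x
    have h2 := hper g g.2 (x - z)
    simp only [hF, vadd_eq_add]
    rw [add_comm (g : EuclideanSpace ℝ (Fin d)) x, h1]
    congr 1
    rw [add_sub_right_comm, h2]
  have hcellD : cell d =ᵐ[volume] D := by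
    rw [cell_eq_parallelepiped]
    exact (ZSpan.fundamentalDomain_ae_parallelepiped b volume).symm
  have step1 : (∫ ξ in cell d, mu ξ * mu (ξ + z)) = ∫ ξ in D, F (ξ + z) := by
    rw [setIntegral_congr_set hcellD]
    congr 1
    ext ξ
    simp [hF, mul_comm]
  have step2 : (∫ ξ in D, F (ξ + z)) = ∫ ξ in (· + z) '' D, F ξ := by
    exact ((measurePreserving_add_right volume z).setIntegral_image_emb
      (measurableEmbedding_addRight z) F D).symm
  have hFD' : IsAddFundamentalDomain (Submodule.span ℤ (Set.range b)) ((· + z) '' D) volume := by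
    have := hFD.vadd_of_comm (z : EuclideanSpace ℝ (Fin d))
    have himg : z +ᵥ D = (· + z) '' D := by
      rw [← Set.image_vadd]
      exact Set.image_congr fun x _ => add_comm z x
    rwa [himg] at this
  have step3 : (∫ ξ in (· + z) '' D, F ξ) = ∫ ξ in D, F ξ :=
    hFD'.setIntegral_eq hFD hFper
  rw [step1, step2, step3, setIntegral_congr_set hcellD]

lemma coord_abs_le_norm (x : EuclideanSpace ℝ (Fin d)) (i : Fin d) : |x i| ≤ ‖x‖ := by
  rw [EuclideanSpace.norm_eq]
  have h1 : |x i| = Real.sqrt (‖x i‖ ^ 2) := by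
    rw [Real.sqrt_sq_eq_abs]; simp
  rw [h1]
  apply Real.sqrt_le_sqrt
  exact Finset.single_le_sum (f := fun j => ‖x j‖ ^ 2) (fun j _ => by positivity)
    (Finset.mem_univ i)

lemma cell_finite : volume (cell d) < ⊤ := by
  have hsub : cell d ⊆ Metric.closedBall 0 (Real.sqrt d) := by
    intro x hx
    rw [Metric.mem_closedBall, dist_zero_right, EuclideanSpace.norm_eq]
    apply Real.sqrt_le_sqrt
    calc ∑ j, ‖x j‖ ^ 2 ≤ ∑ _j : Fin d, (1:ℝ) := by
          apply Finset.sum_le_sum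
          intro j _
          have h := hx j
          have : ‖x j‖ ≤ 1 := by
            rw [Real.norm_eq_abs, abs_of_nonneg h.1]; exact h.2
          nlinarith [norm_nonneg (x j)]
      _ = d := by simp
  exact (measure_mono hsub).trans_lt (measure_closedBall_lt_top)

lemma int_aux (a : EuclideanSpace ℝ (Fin d) → ℝ) (ha_meas : Measurable a)
    (ha_int : Integrable a) (ha_nonneg : ∀ z, 0 ≤ a z)
    (ha_mom2 : Integrable (fun z : EuclideanSpace ℝ (Fin d) => ‖z‖ ^ 2 * a z)) (i : Fin d) :
    Integrable (fun z : EuclideanSpace ℝ (Fin d) => a z * |z i|) := by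
  refine (ha_int.add ha_mom2).mono' ?_ ?_
  · exact (ha_meas.mul (((measurable_pi_apply i).comp (WithLp.measurable_ofLp 2 _)).abs)).aestronglyMeasurable
  · filter_upwards with z
    have h1 : |z i| ≤ ‖z‖ := coord_abs_le_norm z i
    have h2 : ‖z‖ ≤ 1 + ‖z‖ ^ 2 := by nlinarith [norm_nonneg z, sq_nonneg (‖z‖ - 1)]
    have h3 : ‖a z * |z i|‖ = a z * |z i| := by
      rw [Real.norm_eq_abs, abs_mul, abs_of_nonneg (ha_nonneg z), abs_abs]
    rw [h3]
    calc a z * |z i| ≤ a z * (1 + ‖z‖ ^ 2) :=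
          mul_le_mul_of_nonneg_left (h1.trans h2) (ha_nonneg z)
      _ = a z + ‖z‖ ^ 2 * a z := by ring

theorem main
    (d : ℕ)
    (a : EuclideanSpace ℝ (Fin d) → ℝ)
    (ha_meas : Measurable a)
    (ha_symm : ∀ z, a (-z) = a z)
    (ha_nonneg : ∀ z, 0 ≤ a z)
    (haux : ∀ i : Fin d, Integrable (fun z : EuclideanSpace ℝ (Fin d) => a z * |z i|))
    (mu : EuclideanSpace ℝ (Fin d) → ℝ)
    (hmu_meas : Measurable mu)
    (hcorr : ∀ z : EuclideanSpace ℝ (Fin d),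
      (∫ ξ in cell d, mu ξ * mu (ξ + z)) = ∫ ξ in cell d, mu ξ * mu (ξ - z))
    (hfin : volume (cell d) < ⊤)
    (α₂ : ℝ)
    (hmu_abs : ∀ x, |mu x| ≤ α₂) :
    ∀ i : Fin d,
      (∫ ξ in cell d, mu ξ * ∫ q, a (ξ - q) * (ξ - q) i * mu q) = 0 := by
  intro i
  haveI : IsFiniteMeasure (volume.restrict (cell d)) :=
    ⟨by rwa [Measure.restrict_apply_univ]⟩
  have hinner : ∀ ξ, (∫ q, a (ξ - q) * (ξ - q) i * mu q)
      = ∫ z, a z * z i * mu (ξ - z) := by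
    intro ξ
    have h := MeasureTheory.integral_sub_left_eq_self
      (fun z : EuclideanSpace ℝ (Fin d) => a z * z i * mu (ξ - z)) volume ξ
    rw [← h]
    congr 1
    ext q
    rw [sub_sub_cancel]
  have hInt : Integrable (Function.uncurry fun ξ z =>
      mu ξ * (a z * z i * mu (ξ - z))) ((volume.restrict (cell d)).prod volume) := by
    have hbound : Integrable (fun p : EuclideanSpace ℝ (Fin d) × EuclideanSpace ℝ (Fin d) =>
        (fun _ : EuclideanSpace ℝ (Fin d) => α₂ * α₂) p.1 * (fun z => a z * |z i|) p.2)
        ((volume.restrict (cell d)).prod volume) :=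
      (integrable_const (α₂ * α₂)).mul_prod (haux i)
    refine hbound.mono' ?_ ?_
    · exact ((hmu_meas.comp measurable_fst).mul
        (((ha_meas.comp measurable_snd).mul
          ((measurable_pi_apply i).comp ((WithLp.measurable_ofLp 2 _).comp measurable_snd))).mul
          (hmu_meas.comp (measurable_fst.sub measurable_snd)))).aestronglyMeasurable
    · filter_upwards with p
      rcases p with ⟨x, z⟩
      have e1 : |mu x| ≤ α₂ := hmu_abs x
      have e2 : |mu (x - z)| ≤ α₂ := hmu_abs (x - z)
      have e0 : (0:ℝ) ≤ α₂ := le_trans (abs_nonneg _) e1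
      simp only [Function.uncurry]
      rw [Real.norm_eq_abs]
      calc |mu x * (a z * z i * mu (x - z))|
          = |mu x| * (a z * |z i| * |mu (x - z)|) := by
            rw [abs_mul, abs_mul, abs_mul, abs_of_nonneg (ha_nonneg z)]
        _ ≤ α₂ * (a z * |z i| * α₂) := by
            gcongr <;>
              first
                | exact ha_nonneg z
                | exact e1
                | exact e2
                | exact mul_nonneg (mul_nonneg (ha_nonneg z) (abs_nonneg _)) (abs_nonneg _)
                | exact mul_nonneg (ha_nonneg z) (abs_nonneg _)
                | exact abs_nonneg _
        _ = α₂ * α₂ * (a z * |z i|) := by ring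
  have key : (∫ ξ in cell d, mu ξ * ∫ q, a (ξ - q) * (ξ - q) i * mu q)
      = ∫ z, (a z * z i) * ∫ ξ in cell d, mu ξ * mu (ξ - z) := by
    have h1 : (∫ ξ in cell d, mu ξ * ∫ q, a (ξ - q) * (ξ - q) i * mu q)
        = ∫ ξ in cell d, ∫ z, mu ξ * (a z * z i * mu (ξ - z)) := by
      apply integral_congr_ae
      filter_upwards with ξ
      rw [hinner ξ, ← integral_const_mul]
    have h2 := integral_integral_swap (f := fun ξ z =>
      mu ξ * (a z * z i * mu (ξ - z))) hInt
    rw [h1, h2]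
    apply integral_congr_ae
    filter_upwards with z
    rw [← integral_const_mul]
    apply integral_congr_ae
    filter_upwards with ξ
    ring
  rw [key]
  set J : EuclideanSpace ℝ (Fin d) → ℝ :=
    fun z => (a z * z i) * ∫ ξ in cell d, mu ξ * mu (ξ - z) with hJ
  have hJneg : ∀ z, J (-z) = - J z := by
    intro z
    simp only [hJ]
    rw [ha_symm]
    have hc : (∫ ξ in cell d, mu ξ * mu (ξ - -z)) = ∫ ξ in cell d, mu ξ * mu (ξ - z) := by
      simp only [sub_neg_eq_add]
      exact hcorr z
    rw [hc]
    have hz : (-z) i = -(z i) := rfl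
    rw [hz]
    ring
  have h3 : (∫ z, J z) = ∫ z, J (-z) := (integral_neg_eq_self J volume).symm
  have h4 : (∫ z, J (-z)) = - ∫ z, J z := by
    simp only [hJneg]
    exact integral_neg J
  linarith

end Stmt4Aux

/-- For each `i`, `∫_{[0,1]^d} μ(ξ) (∫_{ℝ^d} a(ξ−q)(ξ−q)^i μ(q) dq) dξ = 0`,
i.e. the right-hand side of the first corrector equation satisfies the solvability condition. -/
theorem stmt4
    (d : ℕ) (hd : 1 ≤ d)
    (a : EuclideanSpace ℝ (Fin d) → ℝ)
    (ha_meas : Measurable a)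
    (ha_int : Integrable a)
    (ha_nonneg : ∀ z, 0 ≤ a z)
    (ha_symm : ∀ z, a (-z) = a z)
    (ha_mom2 : Integrable (fun z => ‖z‖ ^ 2 * a z))
    (mu : EuclideanSpace ℝ (Fin d) → ℝ)
    (hmu_meas : Measurable mu)
    (hmu_per : ∀ x i, mu (x + EuclideanSpace.single i 1) = mu x)
    (α₁ α₂ : ℝ) (hα₁ : 0 < α₁) (hα₁₂ : α₁ ≤ α₂)
    (hmu_lb : ∀ x, α₁ ≤ mu x) (hmu_ub : ∀ x, mu x ≤ α₂) :
    ∀ i : Fin d,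
      (∫ ξ in cell d, mu ξ * ∫ q, a (ξ - q) * (ξ - q) i * mu q) = 0 := by
  have hper : ∀ l ∈ Submodule.span ℤ
      (Set.range (EuclideanSpace.basisFun (Fin d) ℝ).toBasis), ∀ x, mu (x + l) = mu x :=
    fun l hl => Stmt4Aux.periodic_lattice mu hmu_per l hl
  exact Stmt4Aux.main d a ha_meas ha_symm ha_nonneg
    (fun i => Stmt4Aux.int_aux a ha_meas ha_int ha_nonneg ha_mom2 i)
    mu hmu_meas
    (fun z => Stmt4Aux.corr_even mu hper z)
    Stmt4Aux.cell_finite α₂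
    (fun x => abs_le.mpr ⟨by linarith [hmu_lb x], hmu_ub x⟩)
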